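/- Let g, g1, g2, g3, g12, g13, g23 be positive reals, X = √(g·g23 + g2·g3), Y = √(g·g13 + g1·g3), Z = √(g·g12 + g1·g2), g123 = (2g1g2g3 + g(g1g23 + g2g13 + g3g12) + 2XYZ)/g², X1 = (g1X + YZ)/g, Y2 = (g2Y + XZ)/g, Z3 = (g3Z + XY)/g. Then X1·Z3 = (2g1g2g3·Y)/g² + (2g1g3·XZ)/g² + (g13·XZ)/g + (g1·g23·Y)/g + (g3·g12·Y)/g. -/

import Mathlib

theorem kashaev_X1Z3_expansion
    (g g1 g2 g3 g12 g13 g23 X Y Z g123 X1 Y2 Z3 : ℝ)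
    (hg : 0 < g) (hg1 : 0 < g1) (hg2 : 0 < g2) (hg3 : 0 < g3)
    (hg12 : 0 < g12) (hg13 : 0 < g13) (hg23 : 0 < g23)
    (hX : X = Real.sqrt (g * g23 + g2 * g3))
    (hY : Y = Real.sqrt (g * g13 + g1 * g3))
    (hZ : Z = Real.sqrt (g * g12 + g1 * g2))
    (hg123 : g123 = (2 * g1 * g2 * g3 + g * (g1 * g23 + g2 * g13 + g3 * g12)
      + 2 * X * Y * Z) / g ^ 2)
    (hX1 : X1 = (g1 * X + Y * Z) / g)
    (hY2 : Y2 = (g2 * Y + X * Z) / g)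
    (hZ3 : Z3 = (g3 * Z + X * Y) / g) :
    X1 * Z3 = (2 * g1 * g2 * g3 * Y) / g ^ 2 + (2 * g1 * g3 * (X * Z)) / g ^ 2
      + (g13 * (X * Z)) / g + (g1 * g23 * Y) / g + (g3 * g12 * Y) / g := by
  have hX2 : X ^ 2 = g * g23 + g2 * g3 := by
    rw [hX, Real.sq_sqrt]; nlinarith
  have hY2' : Y ^ 2 = g * g13 + g1 * g3 := by
    rw [hY, Real.sq_sqrt]; nlinarith
  have hZ2 : Z ^ 2 = g * g12 + g1 * g2 := by
    rw [hZ, Real.sq_sqrt]; nlinarith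
  rw [hX1, hZ3]
  field_simp
  linear_combination (g1 * Y) * hX2 + (X * Z) * hY2' + (Y * g3) * hZ2
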